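/- For every integer n ≥ 1, κ_{2n−1}² κ_{2n}² = (1/4) a_n^{−2} b_n^{−2}. -/

import Mathlib

open MeasureTheory Complex Filter

noncomputable section

/-- The Laurent "cosine" `(z^n + z^(-n))/2`, equal to `cos (n θ)` for `z = e^(iθ)`. -/
def cosL (n : ℕ) (z : ℂ) : ℂ := (z ^ n + (z ^ n)⁻¹) / 2

/-- The Laurent "sine" `(z^n - z^(-n))/(2 i)`, equal to `sin (n θ)` for `z = e^(iθ)`. -/
def sinL (n : ℕ) (z : ℂ) : ℂ := (z ^ n - (z ^ n)⁻¹) / (2 * I)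

/-- The real pairing `⟨f, g⟩_R = ∫ f g dμ`. -/
def innR (μ : Measure ℂ) (f g : ℂ → ℂ) : ℂ := ∫ τ, f τ * g τ ∂μ

/-- A nontrivial probability measure `μ` on the unit circle (infinite support), together
with the data produced by the Gram–Schmidt procedure applied (w.r.t. `⟨·,·⟩_R`) to the
ordered trigonometric system `{1, sin θ, cos θ, …, sin nθ, cos nθ, …}` (written as
Laurent polynomials via `sin nθ = (z^n - z^(-n))/(2i)`, `cos nθ = (z^n + z^(-n))/2`):
`b n * pii n` is `sin nθ` minus its orthogonal projection onto the span of the previous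
elements; `a n * sig n` is `cos nθ` minus its orthogonal projection onto the span of the
previous elements (including `sin nθ`); `a n, b n > 0` are the corresponding norms, so
that `sig n`, `pii n` are the orthonormal trigonometric polynomials; and
`β n = ⟨cos nθ, (b n)⁻¹ pii n⟩_R`.  Conventions: `sig 0 = 1`, `pii 0 = 0`, `β 0 = 0`,
`a 0 = b 0 = 1`. -/
structure OTP where
  μ : Measure ℂ
  prob : IsProbabilityMeasure μ
  circ : μ {z : ℂ | ‖z‖ = 1}ᶜ = 0
  nontriv : ∀ s : Finset ℂ, μ ((s : Set ℂ))ᶜ ≠ 0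
  a : ℕ → ℝ
  b : ℕ → ℝ
  β : ℕ → ℝ
  sig : ℕ → ℂ → ℂ
  pii : ℕ → ℂ → ℂ
  ha : ∀ n, 0 < a n
  hb : ∀ n, 0 < b n
  a_zero : a 0 = 1
  b_zero : b 0 = 1
  β_zero : β 0 = 0
  sig_zero : ∀ z, sig 0 z = 1
  pii_zero : ∀ z, pii 0 z = 0
  pii_span : ∀ n, 1 ≤ n → ∃ c d : ℕ → ℝ, ∀ z : ℂ, z ≠ 0 →
    (b n : ℂ) * pii n z =
      sinL n z + ∑ k ∈ Finset.range n, ((c k : ℂ) * cosL k z + (d k : ℂ) * sinL k z)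
  pii_orth : ∀ n, 1 ≤ n → ∀ k < n,
    innR μ (fun z => (b n : ℂ) * pii n z) (cosL k) = 0 ∧
    innR μ (fun z => (b n : ℂ) * pii n z) (sinL k) = 0
  b_norm : ∀ n, 1 ≤ n →
    ((b n : ℂ)) ^ 2 = innR μ (fun z => (b n : ℂ) * pii n z) (fun z => (b n : ℂ) * pii n z)
  sig_span : ∀ n, 1 ≤ n → ∃ c d : ℕ → ℝ, ∃ e : ℝ, ∀ z : ℂ, z ≠ 0 →
    (a n : ℂ) * sig n z =
      cosL n z + (e : ℂ) * sinL n z +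
        ∑ k ∈ Finset.range n, ((c k : ℂ) * cosL k z + (d k : ℂ) * sinL k z)
  sig_orth : ∀ n, 1 ≤ n →
    (∀ k < n,
      innR μ (fun z => (a n : ℂ) * sig n z) (cosL k) = 0 ∧
      innR μ (fun z => (a n : ℂ) * sig n z) (sinL k) = 0) ∧
    innR μ (fun z => (a n : ℂ) * sig n z) (sinL n) = 0
  a_norm : ∀ n, 1 ≤ n →
    ((a n : ℂ)) ^ 2 = innR μ (fun z => (a n : ℂ) * sig n z) (fun z => (a n : ℂ) * sig n z)
  β_def : ∀ n, 1 ≤ n →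
    (β n : ℂ) = innR μ (cosL n) (fun z => ((b n : ℂ))⁻¹ * pii n z)

/-- The data of `OTP` together with the monic orthogonal polynomials on the unit circle:
`Φ n` is the (unique) monic polynomial of degree `n` with
`∫ conj (τ^j) * Φ n τ dμ = 0` for all `j < n`, and `κ n = ‖Φ n‖⁻¹ > 0` where
`‖Φ n‖² = ∫ |Φ n τ|² dμ`. -/
structure OPUC extends OTP where
  Φ : ℕ → Polynomial ℂ
  Φ_monic : ∀ n, (Φ n).Monic
  Φ_deg : ∀ n, (Φ n).natDegree = n
  Φ_orth : ∀ n, ∀ j < n, ∫ τ, (starRingEnd ℂ) (τ ^ j) * (Φ n).eval τ ∂μ = 0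
  κ : ℕ → ℝ
  κ_pos : ∀ n, 0 < κ n
  κ_def : ∀ n, (κ n) ^ 2 * ∫ τ, ‖(Φ n).eval τ‖ ^ 2 ∂μ = 1

section KPHelpers
open ComplexConjugate

variable {μ : Measure ℂ}

/-- bounded a.e. + AESM -/
def Nice (μ : Measure ℂ) (f : ℂ → ℂ) : Prop :=
  AEStronglyMeasurable f μ ∧ ∃ C : ℝ, ∀ᵐ z ∂μ, ‖f z‖ ≤ C

theorem Nice.integrable [IsFiniteMeasure μ] {f : ℂ → ℂ} (h : Nice μ f) :
    Integrable f μ := by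
  obtain ⟨hm, C, hC⟩ := h
  exact Integrable.mono' (integrable_const C) hm hC

theorem Nice.congr {f g : ℂ → ℂ} (h : Nice μ f) (hfg : f =ᵐ[μ] g) : Nice μ g := by
  obtain ⟨hm, C, hC⟩ := h
  refine ⟨hm.congr hfg, C, ?_⟩
  filter_upwards [hC, hfg] with z h1 h2
  rw [← h2]; exact h1

theorem Nice.mul {f g : ℂ → ℂ} (hf : Nice μ f) (hg : Nice μ g) :
    Nice μ (fun z => f z * g z) := by
  obtain ⟨mf, C, hC⟩ := hf; obtain ⟨mg, D, hD⟩ := hg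
  refine ⟨mf.mul mg, max C 0 * max D 0, ?_⟩
  filter_upwards [hC, hD] with z h1 h2
  calc ‖f z * g z‖ = ‖f z‖ * ‖g z‖ := norm_mul _ _
    _ ≤ max C 0 * max D 0 :=
      mul_le_mul (h1.trans (le_max_left _ _)) (h2.trans (le_max_left _ _))
        (norm_nonneg _) (le_max_right _ _)

theorem Nice.add {f g : ℂ → ℂ} (hf : Nice μ f) (hg : Nice μ g) :
    Nice μ (fun z => f z + g z) := by
  obtain ⟨mf, C, hC⟩ := hf; obtain ⟨mg, D, hD⟩ := hg
  refine ⟨mf.add mg, C + D, ?_⟩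
  filter_upwards [hC, hD] with z h1 h2
  exact (norm_add_le _ _).trans (add_le_add h1 h2)

theorem Nice.const (c : ℂ) : Nice μ (fun _ => c) :=
  ⟨aestronglyMeasurable_const, ‖c‖, Eventually.of_forall fun _ => le_rfl⟩

theorem Nice.const_mul {f : ℂ → ℂ} (hf : Nice μ f) (c : ℂ) :
    Nice μ (fun z => c * f z) := (Nice.const c).mul hf

theorem Nice.sum {ι : Type*} {s : Finset ι} {f : ι → ℂ → ℂ}
    (h : ∀ i ∈ s, Nice μ (f i)) : Nice μ (fun z => ∑ i ∈ s, f i z) := by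
  classical
  induction s using Finset.induction_on with
  | empty => simpa using Nice.const (μ := μ) 0
  | @insert i s hi ih =>
      have := (h i (Finset.mem_insert_self i s)).add
        (ih fun j hj => h j (Finset.mem_insert_of_mem hj))
      simpa [Finset.sum_insert hi] using this

theorem measurable_zpowC (m : ℤ) : Measurable fun z : ℂ => z ^ m := by
  cases m with
  | ofNat k => simpa using (measurable_id (α := ℂ)).pow_const k
  | negSucc k => simp only [zpow_negSucc]; exact ((measurable_id (α := ℂ)).pow_const (k+1)).inv

theorem nice_zpow (hc : ∀ᵐ z ∂μ, ‖z‖ = 1) (m : ℤ) :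
    Nice μ (fun z => z ^ m) := by
  refine ⟨(measurable_zpowC m).aestronglyMeasurable, 1, ?_⟩
  filter_upwards [hc] with z hz
  rw [norm_zpow]
  simp [hz]

theorem nice_pow (hc : ∀ᵐ z ∂μ, ‖z‖ = 1) (k : ℕ) :
    Nice μ (fun z => z ^ k) := by
  have := nice_zpow hc (k : ℤ)
  exact this.congr (Eventually.of_forall fun z => by simp)

theorem nice_cosL (hc : ∀ᵐ z ∂μ, ‖z‖ = 1) (k : ℕ) : Nice μ (cosL k) := by
  refine ⟨(((measurable_id (α := ℂ)).pow_const k).add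
    ((measurable_id (α := ℂ)).pow_const k).inv).div_const 2 |>.aestronglyMeasurable, 1, ?_⟩
  filter_upwards [hc] with z hz
  have h1 : ‖z ^ k + (z ^ k)⁻¹‖ ≤ 2 := by
    refine (norm_add_le _ _).trans ?_
    simp only [norm_pow, norm_inv, hz]; norm_num
  have : ‖cosL k z‖ = ‖z ^ k + (z ^ k)⁻¹‖ / 2 := by
    rw [cosL, norm_div]; norm_num
  rw [this]; linarith

theorem nice_sinL (hc : ∀ᵐ z ∂μ, ‖z‖ = 1) (k : ℕ) : Nice μ (sinL k) := by
  refine ⟨((((measurable_id (α := ℂ)).pow_const k).sub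
    ((measurable_id (α := ℂ)).pow_const k).inv).div_const (2 * I)).aestronglyMeasurable, 1, ?_⟩
  filter_upwards [hc] with z hz
  have h1 : ‖z ^ k - (z ^ k)⁻¹‖ ≤ 2 := by
    refine (norm_sub_le _ _).trans ?_
    simp only [norm_pow, norm_inv, hz]; norm_num
  have h2 : ‖(2 * I : ℂ)‖ = 2 := by simp
  have : ‖sinL k z‖ = ‖z ^ k - (z ^ k)⁻¹‖ / 2 := by
    rw [sinL, norm_div, h2]
  rw [this]; linarith

theorem nice_poly (hc : ∀ᵐ z ∂μ, ‖z‖ = 1) (p : Polynomial ℂ) :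
    Nice μ (fun z => p.eval z) := by
  refine ⟨p.continuous.measurable.aestronglyMeasurable,
    ∑ i ∈ Finset.range (p.natDegree + 1), ‖p.coeff i‖, ?_⟩
  filter_upwards [hc] with z hz
  rw [Polynomial.eval_eq_sum_range]
  refine (norm_sum_le _ _).trans ?_
  refine Finset.sum_le_sum fun i _ => ?_
  rw [norm_mul, norm_pow]
  simp [hz]

/-- integral commutes with mul swap -/
theorem int_comm (μ : Measure ℂ) (f g : ℂ → ℂ) :
    ∫ z, f z * g z ∂μ = ∫ z, g z * f z ∂μ :=
  integral_congr_ae (Eventually.of_forall fun z => mul_comm _ _)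

theorem int_const_mul (μ : Measure ℂ) (c : ℂ) (f : ℂ → ℂ) :
    ∫ z, c * f z ∂μ = c * ∫ z, f z ∂μ := by
  simpa [smul_eq_mul] using integral_smul (μ := μ) c f

/-- `Jz μ m f = ∫ z^m f z dμ`. -/
def Jz (μ : Measure ℂ) (m : ℤ) (f : ℂ → ℂ) : ℂ := ∫ z, z ^ m * f z ∂μ

theorem Jz_congr {m : ℤ} {f g : ℂ → ℂ} (h : f =ᵐ[μ] g) : Jz μ m f = Jz μ m g := by
  refine integral_congr_ae ?_
  filter_upwards [h] with z hz
  rw [hz]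

theorem Jz_shift (hz0 : ∀ᵐ z ∂μ, z ≠ 0) (m l : ℤ) (f : ℂ → ℂ) :
    Jz μ m (fun z => z ^ l * f z) = Jz μ (m + l) f := by
  refine integral_congr_ae ?_
  filter_upwards [hz0] with z hz
  rw [← mul_assoc, ← zpow_add₀ hz]

theorem Jz_shift_nat (hz0 : ∀ᵐ z ∂μ, z ≠ 0) (m : ℤ) (l : ℕ) (f : ℂ → ℂ) :
    Jz μ m (fun z => z ^ l * f z) = Jz μ (m + l) f := by
  rw [← Jz_shift hz0 m (l : ℤ) f]
  refine integral_congr_ae (Eventually.of_forall fun z => by simp [zpow_natCast])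


theorem cosL_zpow {z : ℂ} (hz : z ≠ 0) (k : ℕ) :
    cosL k z = (z ^ (k : ℤ) + z ^ (-(k : ℤ))) / 2 := by
  rw [cosL, zpow_neg, zpow_natCast]

theorem sinL_zpow {z : ℂ} (hz : z ≠ 0) (k : ℕ) :
    sinL k z = (z ^ (k : ℤ) - z ^ (-(k : ℤ))) / (2 * I) := by
  rw [sinL, zpow_neg, zpow_natCast]

variable [IsFiniteMeasure μ]

theorem int_cos (hc : ∀ᵐ z ∂μ, ‖z‖ = 1) (k : ℕ) {f : ℂ → ℂ} (hf : Nice μ f) :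
    ∫ z, cosL k z * f z ∂μ = (Jz μ k f + Jz μ (-(k : ℤ)) f) / 2 := by
  have hz0 : ∀ᵐ z ∂μ, z ≠ 0 := by
    filter_upwards [hc] with z hz h0
    simp [h0] at hz
  have : ∫ z, cosL k z * f z ∂μ
      = ∫ z, (z ^ (k : ℤ) * f z + z ^ (-(k : ℤ)) * f z) / 2 ∂μ := by
    refine integral_congr_ae ?_
    filter_upwards [hz0] with z hz
    rw [cosL_zpow hz]; ring
  rw [this, integral_div, integral_add ((nice_zpow hc _).mul hf).integrable
    ((nice_zpow hc _).mul hf).integrable]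
  rfl

theorem int_sin (hc : ∀ᵐ z ∂μ, ‖z‖ = 1) (k : ℕ) {f : ℂ → ℂ} (hf : Nice μ f) :
    ∫ z, sinL k z * f z ∂μ = (Jz μ k f - Jz μ (-(k : ℤ)) f) / (2 * I) := by
  have hz0 : ∀ᵐ z ∂μ, z ≠ 0 := by
    filter_upwards [hc] with z hz h0
    simp [h0] at hz
  have : ∫ z, sinL k z * f z ∂μ
      = ∫ z, (z ^ (k : ℤ) * f z - z ^ (-(k : ℤ)) * f z) / (2 * I) ∂μ := by
    refine integral_congr_ae ?_
    filter_upwards [hz0] with z hz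
    rw [sinL_zpow hz]; ring
  rw [this, integral_div, integral_sub ((nice_zpow hc _).mul hf).integrable
    ((nice_zpow hc _).mul hf).integrable]
  rfl

theorem Jz_pos_eq (hc : ∀ᵐ z ∂μ, ‖z‖ = 1) (k : ℕ) {f : ℂ → ℂ} (hf : Nice μ f) :
    Jz μ k f = (∫ z, cosL k z * f z ∂μ) + I * ∫ z, sinL k z * f z ∂μ := by
  rw [int_cos hc k hf, int_sin hc k hf]
  field_simp
  ring

theorem Jz_neg_eq (hc : ∀ᵐ z ∂μ, ‖z‖ = 1) (k : ℕ) {f : ℂ → ℂ} (hf : Nice μ f) :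
    Jz μ (-(k : ℤ)) f = (∫ z, cosL k z * f z ∂μ) - I * ∫ z, sinL k z * f z ∂μ := by
  rw [int_cos hc k hf, int_sin hc k hf]
  field_simp
  ring

/-- generic representation: head Laurent coefficients `u` at `z^n`, `v` at `z^(-n)`,
plus a trigonometric tail of degree `< n`. -/
def repF (n : ℕ) (u v : ℂ) (γ δ : ℕ → ℂ) : ℂ → ℂ := fun z =>
  u * z ^ (n : ℤ) + v * z ^ (-(n : ℤ)) +
    ∑ k ∈ Finset.range n, (γ k * cosL k z + δ k * sinL k z)

theorem head2 {z : ℂ} (hz : z ≠ 0) (p q : ℂ) (n : ℕ) :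
    p * cosL n z + q * sinL n z
      = ((p - I * q) / 2) * z ^ (n : ℤ) + ((p + I * q) / 2) * z ^ (-(n : ℤ)) := by
  rw [cosL_zpow hz, sinL_zpow hz, zpow_neg]
  set t := z ^ (n : ℤ) with ht
  have h1 : t ≠ 0 := zpow_ne_zero _ hz
  have hI : (1:ℂ) / (2 * I) = -I / 2 := by
    rw [div_eq_iff (by simp [I_ne_zero])]; linear_combination I_sq
  rw [div_eq_mul_one_div (t - t⁻¹), hI]
  ring

theorem nice_repF (hc : ∀ᵐ z ∂μ, ‖z‖ = 1) (n : ℕ) (u v : ℂ) (γ δ : ℕ → ℂ) :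
    Nice μ (repF n u v γ δ) := by
  have h1 : Nice μ (fun z => u * z ^ (n:ℤ)) := (nice_zpow hc _).const_mul u
  have h2 : Nice μ (fun z => v * z ^ (-(n:ℤ))) := (nice_zpow hc _).const_mul v
  have h3 : Nice μ (fun z => ∑ k ∈ Finset.range n, (γ k * cosL k z + δ k * sinL k z)) :=
    Nice.sum fun k _ => ((nice_cosL hc k).const_mul (γ k)).add ((nice_sinL hc k).const_mul (δ k))
  exact (h1.add h2).add h3

theorem repF_comb (n : ℕ) (x₁ x₂ u₁ v₁ u₂ v₂ : ℂ) (γ₁ δ₁ γ₂ δ₂ : ℕ → ℂ) (z : ℂ) :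
    x₁ * repF n u₁ v₁ γ₁ δ₁ z + x₂ * repF n u₂ v₂ γ₂ δ₂ z
      = repF n (x₁ * u₁ + x₂ * u₂) (x₁ * v₁ + x₂ * v₂)
          (fun k => x₁ * γ₁ k + x₂ * γ₂ k) (fun k => x₁ * δ₁ k + x₂ * δ₂ k) z := by
  have hs : ∑ k ∈ Finset.range n,
      ((x₁ * γ₁ k + x₂ * γ₂ k) * cosL k z + (x₁ * δ₁ k + x₂ * δ₂ k) * sinL k z)
      = (∑ k ∈ Finset.range n, (γ₁ k * cosL k z + δ₁ k * sinL k z)) * x₁ +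
        (∑ k ∈ Finset.range n, (γ₂ k * cosL k z + δ₂ k * sinL k z)) * x₂ := by
    rw [Finset.sum_mul, Finset.sum_mul, ← Finset.sum_add_distrib]
    exact Finset.sum_congr rfl fun k _ => by ring
  simp only [repF]
  rw [hs]
  ring

theorem conj_eq_inv {z : ℂ} (hz : ‖z‖ = 1) : (starRingEnd ℂ) z = z⁻¹ := by
  have h0 : z ≠ 0 := by intro h; simp [h] at hz
  rw [Complex.inv_def]
  simp [Complex.normSq_eq_norm_sq, hz]

theorem conj_cosL {z : ℂ} (hz : ‖z‖ = 1) (k : ℕ) :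
    (starRingEnd ℂ) (cosL k z) = cosL k z := by
  have h0 : z ≠ 0 := by intro h; simp [h] at hz
  have hp : (z ^ k) ≠ 0 := pow_ne_zero _ h0
  simp only [cosL, map_div₀, map_add, map_pow, map_inv₀, conj_eq_inv hz, inv_pow, inv_inv,
    Complex.conj_ofNat]
  rw [add_comm]

theorem conj_sinL {z : ℂ} (hz : ‖z‖ = 1) (k : ℕ) :
    (starRingEnd ℂ) (sinL k z) = sinL k z := by
  have h0 : z ≠ 0 := by intro h; simp [h] at hz
  have hp : (z ^ k) ≠ 0 := pow_ne_zero _ h0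
  simp only [sinL, map_div₀, map_sub, map_mul, map_pow, map_inv₀, conj_eq_inv hz,
    inv_pow, inv_inv, Complex.conj_I, Complex.conj_ofNat]
  rw [div_eq_div_iff (by simp [Complex.I_ne_zero]) (by simp [Complex.I_ne_zero])]
  ring

theorem conjZpowCirc {z : ℂ} (hz : ‖z‖ = 1) (m : ℤ) :
    (starRingEnd ℂ) (z ^ m) = z ^ (-m) := by
  rw [map_zpow₀, conj_eq_inv hz, inv_zpow, ← zpow_neg]

theorem repF_conj {z : ℂ} (hz : ‖z‖ = 1) (n : ℕ) (u v : ℂ) (γ δ : ℕ → ℂ) :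
    (starRingEnd ℂ) (repF n u v γ δ z)
      = repF n ((starRingEnd ℂ) v) ((starRingEnd ℂ) u)
          (fun k => (starRingEnd ℂ) (γ k)) (fun k => (starRingEnd ℂ) (δ k)) z := by
  simp only [repF, map_add, map_mul, map_sum, conj_cosL hz, conj_sinL hz, conjZpowCirc hz,
    neg_neg]
  ring

theorem repF_int (hc : ∀ᵐ z ∂μ, ‖z‖ = 1) (n : ℕ) (u v : ℂ) (γ δ : ℕ → ℂ)
    {f : ℂ → ℂ} (hf : Nice μ f) :
    ∫ z, repF n u v γ δ z * f z ∂μ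
      = u * Jz μ n f + v * Jz μ (-(n : ℤ)) f +
          ∑ k ∈ Finset.range n,
            (γ k * ((Jz μ k f + Jz μ (-(k : ℤ)) f) / 2) +
             δ k * ((Jz μ k f - Jz μ (-(k : ℤ)) f) / (2 * I))) := by
  have h1 : Integrable (fun z => u * (z ^ (n:ℤ) * f z)) μ :=
    (((nice_zpow hc _).mul hf).const_mul u).integrable
  have h2 : Integrable (fun z => v * (z ^ (-(n:ℤ)) * f z)) μ :=
    (((nice_zpow hc _).mul hf).const_mul v).integrable
  have h3 : ∀ k, Integrable (fun z => γ k * (cosL k z * f z) + δ k * (sinL k z * f z)) μ :=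
    fun k => ((((nice_cosL hc k).mul hf).const_mul (γ k)).add
      (((nice_sinL hc k).mul hf).const_mul (δ k))).integrable
  have h4 : Integrable (fun z =>
      ∑ k ∈ Finset.range n, (γ k * (cosL k z * f z) + δ k * (sinL k z * f z))) μ :=
    integrable_finset_sum _ (fun k _ => h3 k)
  have key : ∫ z, repF n u v γ δ z * f z ∂μ
      = ∫ z, (u * (z ^ (n:ℤ) * f z) + v * (z ^ (-(n:ℤ)) * f z)) +
          (∑ k ∈ Finset.range n, (γ k * (cosL k z * f z) + δ k * (sinL k z * f z))) ∂μ := by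
    refine integral_congr_ae (Eventually.of_forall fun z => ?_)
    simp only [repF]
    rw [add_mul, add_mul, Finset.sum_mul,
      Finset.sum_congr rfl (fun k _ => show
        (γ k * cosL k z + δ k * sinL k z) * f z
          = γ k * (cosL k z * f z) + δ k * (sinL k z * f z) from by ring)]
    ring
  have h12 : Integrable (fun z => u * (z ^ (n:ℤ) * f z) + v * (z ^ (-(n:ℤ)) * f z)) μ :=
    h1.add h2
  rw [key, integral_add h12 h4, integral_add h1 h2, integral_finset_sum _ (fun k _ => h3 k)]
  rw [int_const_mul, int_const_mul]
  congr 1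
  refine Finset.sum_congr rfl fun k _ => ?_
  rw [integral_add (((nice_cosL hc k).mul hf).const_mul (γ k)).integrable
      (((nice_sinL hc k).mul hf).const_mul (δ k)).integrable,
    int_const_mul, int_const_mul, int_cos hc k hf, int_sin hc k hf]

theorem key_norm (N : ℕ) (P Q : ℂ → ℂ)
    (hPact : ∀ g : ℂ → ℂ, Nice μ g →
      (∀ m : ℤ, -(N : ℤ) < m → m ≤ 0 → Jz μ m g = 0) →
      ∫ z, (starRingEnd ℂ) (P z) * g z ∂μ = Jz μ (-(N : ℤ)) g)
    (hQact : ∀ g : ℂ → ℂ, Nice μ g →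
      (∀ m : ℤ, -(N : ℤ) < m → m ≤ 0 → Jz μ m g = 0) →
      ∫ z, (starRingEnd ℂ) (Q z) * g z ∂μ = Jz μ (-(N : ℤ)) g)
    (hPo : ∀ m : ℤ, -(N : ℤ) < m → m ≤ 0 → Jz μ m P = 0)
    (hQo : ∀ m : ℤ, -(N : ℤ) < m → m ≤ 0 → Jz μ m Q = 0)
    (hPn : Nice μ P) (hQn : Nice μ Q) :
    ∫ z, (starRingEnd ℂ) (P z) * P z ∂μ = ∫ z, (starRingEnd ℂ) (Q z) * Q z ∂μ := by
  have h1 : ∫ z, (starRingEnd ℂ) (Q z) * Q z ∂μ = Jz μ (-(N:ℤ)) Q := hQact Q hQn hQo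
  have h2 : ∫ z, (starRingEnd ℂ) (P z) * Q z ∂μ = Jz μ (-(N:ℤ)) Q := hPact Q hQn hQo
  have h3 : ∫ z, (starRingEnd ℂ) (Q z) * P z ∂μ = Jz μ (-(N:ℤ)) P := hQact P hPn hPo
  have h4 : ∫ z, (starRingEnd ℂ) (P z) * P z ∂μ = Jz μ (-(N:ℤ)) P := hPact P hPn hPo
  have hconjQP : ∫ z, (starRingEnd ℂ) (P z) * Q z ∂μ
      = (starRingEnd ℂ) (∫ z, (starRingEnd ℂ) (Q z) * P z ∂μ) := by
    rw [← integral_conj]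
    refine integral_congr_ae (Eventually.of_forall fun z => ?_)
    simp only [map_mul, Complex.conj_conj]
    ring
  have hconjPP : ∫ z, (starRingEnd ℂ) (P z) * P z ∂μ
      = (starRingEnd ℂ) (∫ z, (starRingEnd ℂ) (P z) * P z ∂μ) := by
    conv_rhs => rw [← integral_conj]
    refine integral_congr_ae (Eventually.of_forall fun z => ?_)
    simp only [map_mul, Complex.conj_conj]
    ring
  calc ∫ z, (starRingEnd ℂ) (P z) * P z ∂μ
      = (starRingEnd ℂ) (∫ z, (starRingEnd ℂ) (P z) * P z ∂μ) := hconjPP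
    _ = (starRingEnd ℂ) (Jz μ (-(N:ℤ)) P) := by rw [h4]
    _ = (starRingEnd ℂ) (∫ z, (starRingEnd ℂ) (Q z) * P z ∂μ) := by rw [h3]
    _ = ∫ z, (starRingEnd ℂ) (P z) * Q z ∂μ := hconjQP.symm
    _ = Jz μ (-(N:ℤ)) Q := h2
    _ = ∫ z, (starRingEnd ℂ) (Q z) * Q z ∂μ := h1.symm

theorem poly_act (hc : ∀ᵐ z ∂μ, ‖z‖ = 1) {N : ℕ} (p : Polynomial ℂ)
    (hdeg : p.natDegree = N) (hmonic : p.Monic) (g : ℂ → ℂ) (hg : Nice μ g)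
    (hgo : ∀ m : ℤ, -(N : ℤ) < m → m ≤ 0 → Jz μ m g = 0) :
    ∫ z, (starRingEnd ℂ) (p.eval z) * g z ∂μ = Jz μ (-(N : ℤ)) g := by
  have key : ∫ z, (starRingEnd ℂ) (p.eval z) * g z ∂μ
      = ∫ z, ∑ j ∈ Finset.range (N + 1),
          (starRingEnd ℂ) (p.coeff j) * (z ^ (-(j : ℤ)) * g z) ∂μ := by
    refine integral_congr_ae ?_
    filter_upwards [hc] with z hz
    rw [Polynomial.eval_eq_sum_range, hdeg, map_sum, Finset.sum_mul]
    refine Finset.sum_congr rfl fun j _ => ?_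
    have hzp : ((z : ℂ) ^ j)⁻¹ = z ^ (-(j : ℤ)) := by rw [zpow_neg, zpow_natCast]
    rw [map_mul, map_pow, conj_eq_inv hz, inv_pow, hzp]
    ring
  rw [key, integral_finset_sum _ (fun j _ =>
    (((nice_zpow hc _).mul hg).const_mul _).integrable)]
  have hval : ∀ j ∈ Finset.range (N + 1),
      (∫ a, (starRingEnd ℂ) (p.coeff j) * (a ^ (-(j:ℤ)) * g a) ∂μ)
        = if j = N then Jz μ (-(N:ℤ)) g else 0 := by
    intro j hj
    rw [int_const_mul]
    by_cases hjN : j = N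
    · subst hjN
      rw [if_pos rfl, ← hdeg, hmonic.coeff_natDegree, hdeg, map_one, one_mul]
      rfl
    · have hjlt' : j < N := by
        have := Finset.mem_range.mp hj; omega
      rw [if_neg hjN]
      have h0 : Jz μ (-(j:ℤ)) g = 0 := hgo _ (by omega) (by omega)
      rw [show (∫ z, z ^ (-(j:ℤ)) * g z ∂μ) = Jz μ (-(j:ℤ)) g from rfl, h0, mul_zero]
  rw [Finset.sum_congr rfl hval]
  simp


end KPHelpers

/-- For `n ≥ 1`, `κ_{2n-1}² κ_{2n}² = (1/4) a_n^(-2) b_n^(-2)`. -/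
theorem kappa_product (D : OPUC) (n : ℕ) (hn : 1 ≤ n) :
    (D.κ (2 * n - 1)) ^ 2 * (D.κ (2 * n)) ^ 2 =
      (1 / 4) * ((D.a n) ^ 2)⁻¹ * ((D.b n) ^ 2)⁻¹ := by
  classical
  set μ := D.μ with hμdef
  haveI : IsProbabilityMeasure μ := D.prob
  have hc : ∀ᵐ z ∂μ, ‖z‖ = 1 := by
    have h := D.circ
    rw [Set.compl_setOf] at h
    exact ae_iff.mpr h
  have hz0 : ∀ᵐ z ∂μ, z ≠ 0 := by
    filter_upwards [hc] with z hz h0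
    simp [h0] at hz
  obtain ⟨cA, dA, e, hA⟩ := D.sig_span n hn
  obtain ⟨cB, dB, hB⟩ := D.pii_span n hn
  set a : ℝ := D.a n with hadef
  set b : ℝ := D.b n with hbdef
  have ha : (0:ℝ) < a := D.ha n
  have hb : (0:ℝ) < b := D.hb n
  set A : ℂ → ℂ := fun z => (a : ℂ) * D.sig n z with hAdef
  set B : ℂ → ℂ := fun z => (b : ℂ) * D.pii n z with hBdef
  -- primitive orthogonality facts
  have hcosA : ∀ k, k < n → ∫ z, cosL k z * A z ∂μ = 0 := by
    intro k hk
    have h := ((D.sig_orth n hn).1 k hk).1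
    rw [int_comm]
    simpa [innR, hAdef] using h
  have hsinA : ∀ k, k < n → ∫ z, sinL k z * A z ∂μ = 0 := by
    intro k hk
    have h := ((D.sig_orth n hn).1 k hk).2
    rw [int_comm]
    simpa [innR, hAdef] using h
  have hsinnA : ∫ z, sinL n z * A z ∂μ = 0 := by
    have h := (D.sig_orth n hn).2
    rw [int_comm]
    simpa [innR, hAdef] using h
  have hcosB : ∀ k, k < n → ∫ z, cosL k z * B z ∂μ = 0 := by
    intro k hk
    have h := (D.pii_orth n hn k hk).1
    rw [int_comm]
    simpa [innR, hBdef] using h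
  have hsinB : ∀ k, k < n → ∫ z, sinL k z * B z ∂μ = 0 := by
    intro k hk
    have h := (D.pii_orth n hn k hk).2
    rw [int_comm]
    simpa [innR, hBdef] using h
  have hAA : ∫ z, A z * A z ∂μ = ((a:ℂ))^2 := by
    have h := D.a_norm n hn
    simpa [innR, hAdef] using h.symm
  have hBB : ∫ z, B z * B z ∂μ = ((b:ℂ))^2 := by
    have h := D.b_norm n hn
    simpa [innR, hBdef] using h.symm
  -- representations
  have repA : A =ᵐ[μ] repF n ((1 - I*(e:ℂ))/2) ((1 + I*(e:ℂ))/2)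
      (fun k => ((cA k : ℝ) : ℂ)) (fun k => ((dA k : ℝ) : ℂ)) := by
    filter_upwards [hz0] with z hz
    have h2 := head2 hz 1 (e:ℂ) n
    rw [one_mul] at h2
    show A z = _
    rw [hAdef]
    simp only [repF]
    rw [hA z hz, ← h2]
  have repB : B =ᵐ[μ] repF n ((0 - I*(1:ℂ))/2) ((0 + I*(1:ℂ))/2)
      (fun k => ((cB k : ℝ) : ℂ)) (fun k => ((dB k : ℝ) : ℂ)) := by
    filter_upwards [hz0] with z hz
    have h2 := head2 hz 0 1 n
    rw [zero_mul, one_mul, zero_add] at h2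
    show B z = _
    rw [hBdef]
    simp only [repF]
    rw [hB z hz, ← h2]
  have nA : Nice μ A := (nice_repF hc n _ _ _ _).congr repA.symm
  have nB : Nice μ B := (nice_repF hc n _ _ _ _).congr repB.symm
  -- vanishing of low moments
  have hJA : ∀ m : ℤ, -(n:ℤ) < m → m < (n:ℤ) → Jz μ m A = 0 := by
    intro m h1 h2
    rcases le_or_gt 0 m with hm | hm
    · lift m to ℕ using hm with k
      have hk : k < n := by exact_mod_cast h2
      rw [Jz_pos_eq hc k nA, hcosA k hk, hsinA k hk]
      simp
    · have hk : m = -(((-m).toNat : ℕ) : ℤ) := by omega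
      have hklt : (-m).toNat < n := by omega
      rw [hk, Jz_neg_eq hc _ nA, hcosA _ hklt, hsinA _ hklt]
      simp
  have hJB : ∀ m : ℤ, -(n:ℤ) < m → m < (n:ℤ) → Jz μ m B = 0 := by
    intro m h1 h2
    rcases le_or_gt 0 m with hm | hm
    · lift m to ℕ using hm with k
      have hk : k < n := by exact_mod_cast h2
      rw [Jz_pos_eq hc k nB, hcosB k hk, hsinB k hk]
      simp
    · have hk : m = -(((-m).toNat : ℕ) : ℤ) := by omega
      have hklt : (-m).toNat < n := by omega
      rw [hk, Jz_neg_eq hc _ nB, hcosB _ hklt, hsinB _ hklt]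
      simp
  -- generic tail-vanishing
  have tail0 : ∀ (γ δ : ℕ → ℂ) (g : ℂ → ℂ),
      (∀ m : ℤ, -(n:ℤ) < m → m < (n:ℤ) → Jz μ m g = 0) →
      (∑ k ∈ Finset.range n,
        (γ k * ((Jz μ (k:ℤ) g + Jz μ (-(k:ℤ)) g)/2) +
         δ k * ((Jz μ (k:ℤ) g - Jz μ (-(k:ℤ)) g)/(2*I)))) = 0 := by
    intro γ δ g hg
    refine Finset.sum_eq_zero fun k hk => ?_
    have hk' := Finset.mem_range.mp hk
    rw [hg (k:ℤ) (by omega) (by omega), hg (-(k:ℤ)) (by omega) (by omega)]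
    simp
  -- moments at ±n of A
  have hcosnA : ∫ z, cosL n z * A z ∂μ = ((a:ℂ))^2 := by
    have hexp : ∫ z, A z * A z ∂μ
        = ((1 - I*(e:ℂ))/2) * Jz μ (n:ℤ) A + ((1 + I*(e:ℂ))/2) * Jz μ (-(n:ℤ)) A +
          ∑ k ∈ Finset.range n,
            (((cA k : ℝ) : ℂ) * ((Jz μ (k:ℤ) A + Jz μ (-(k:ℤ)) A)/2) +
             ((dA k : ℝ) : ℂ) * ((Jz μ (k:ℤ) A - Jz μ (-(k:ℤ)) A)/(2*I))) := by
      have hcong : (fun z => A z * A z) =ᵐ[μ]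
          (fun z => repF n ((1 - I*(e:ℂ))/2) ((1 + I*(e:ℂ))/2)
            (fun k => ((cA k : ℝ) : ℂ)) (fun k => ((dA k : ℝ) : ℂ)) z * A z) := by
        filter_upwards [repA] with z h
        rw [h]
      rw [integral_congr_ae hcong]
      exact repF_int hc n _ _ _ _ nA
    rw [hAA, tail0 _ _ _ hJA] at hexp
    have h1 : Jz μ (n:ℤ) A = ∫ z, cosL n z * A z ∂μ := by
      rw [Jz_pos_eq hc n nA, hsinnA]; ring
    have h2 : Jz μ (-(n:ℤ)) A = ∫ z, cosL n z * A z ∂μ := by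
      rw [Jz_neg_eq hc n nA, hsinnA]; ring
    rw [h1, h2] at hexp
    linear_combination -hexp
  have hJAn : Jz μ (n:ℤ) A = ((a:ℂ))^2 := by
    rw [Jz_pos_eq hc n nA, hsinnA, hcosnA]; ring
  have hJAnneg : Jz μ (-(n:ℤ)) A = ((a:ℂ))^2 := by
    rw [Jz_neg_eq hc n nA, hsinnA, hcosnA]; ring
  -- ∫ A·B = 0
  have hAB : ∫ z, A z * B z ∂μ = 0 := by
    rw [int_comm]
    have hcong : (fun z => B z * A z) =ᵐ[μ]
        (fun z => repF n ((0 - I*(1:ℂ))/2) ((0 + I*(1:ℂ))/2)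
          (fun k => ((cB k : ℝ) : ℂ)) (fun k => ((dB k : ℝ) : ℂ)) z * A z) := by
      filter_upwards [repB] with z h
      rw [h]
    rw [integral_congr_ae hcong]
    rw [repF_int hc n _ _ _ _ nA, tail0 _ _ _ hJA, hJAn, hJAnneg]
    ring
  -- moments at ±n of B
  have hsinnB : ∫ z, sinL n z * B z ∂μ = ((b:ℂ))^2 := by
    have hexp : ∫ z, B z * B z ∂μ
        = ((0 - I*(1:ℂ))/2) * Jz μ (n:ℤ) B + ((0 + I*(1:ℂ))/2) * Jz μ (-(n:ℤ)) B +
          ∑ k ∈ Finset.range n,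
            (((cB k : ℝ) : ℂ) * ((Jz μ (k:ℤ) B + Jz μ (-(k:ℤ)) B)/2) +
             ((dB k : ℝ) : ℂ) * ((Jz μ (k:ℤ) B - Jz μ (-(k:ℤ)) B)/(2*I))) := by
      have hcong : (fun z => B z * B z) =ᵐ[μ]
          (fun z => repF n ((0 - I*(1:ℂ))/2) ((0 + I*(1:ℂ))/2)
            (fun k => ((cB k : ℝ) : ℂ)) (fun k => ((dB k : ℝ) : ℂ)) z * B z) := by
        filter_upwards [repB] with z h
        rw [h]
      rw [integral_congr_ae hcong]
      exact repF_int hc n _ _ _ _ nB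
    rw [hBB, tail0 _ _ _ hJB, Jz_pos_eq hc n nB, Jz_neg_eq hc n nB] at hexp
    linear_combination -hexp + (∫ z, sinL n z * B z ∂μ) * I_sq
  have hcosnB : ∫ z, cosL n z * B z ∂μ = -(e:ℂ) * ((b:ℂ))^2 := by
    have hexp : ∫ z, A z * B z ∂μ
        = ((1 - I*(e:ℂ))/2) * Jz μ (n:ℤ) B + ((1 + I*(e:ℂ))/2) * Jz μ (-(n:ℤ)) B +
          ∑ k ∈ Finset.range n,
            (((cA k : ℝ) : ℂ) * ((Jz μ (k:ℤ) B + Jz μ (-(k:ℤ)) B)/2) +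
             ((dA k : ℝ) : ℂ) * ((Jz μ (k:ℤ) B - Jz μ (-(k:ℤ)) B)/(2*I))) := by
      have hcong : (fun z => A z * B z) =ᵐ[μ]
          (fun z => repF n ((1 - I*(e:ℂ))/2) ((1 + I*(e:ℂ))/2)
            (fun k => ((cA k : ℝ) : ℂ)) (fun k => ((dA k : ℝ) : ℂ)) z * B z) := by
        filter_upwards [repA] with z h
        rw [h]
      rw [integral_congr_ae hcong]
      exact repF_int hc n _ _ _ _ nB
    rw [hAB, tail0 _ _ _ hJB, Jz_pos_eq hc n nB, Jz_neg_eq hc n nB, hsinnB] at hexp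
    linear_combination -hexp + (e:ℂ) * ((b:ℂ))^2 * I_sq
  have hJBn : Jz μ (n:ℤ) B = (I - (e:ℂ)) * ((b:ℂ))^2 := by
    rw [Jz_pos_eq hc n nB, hcosnB, hsinnB]; ring
  have hJBnneg : Jz μ (-(n:ℤ)) B = -(I + (e:ℂ)) * ((b:ℂ))^2 := by
    rw [Jz_neg_eq hc n nB, hcosnB, hsinnB]; ring
  -- linearity of moments
  have hJF : ∀ (x₁ x₂ : ℂ) (m : ℤ),
      Jz μ m (fun z => x₁ * A z + x₂ * B z) = x₁ * Jz μ m A + x₂ * Jz μ m B := by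
    intro x₁ x₂ m
    have hint1 : Integrable (fun z => x₁ * (z ^ m * A z)) μ :=
      (((nice_zpow hc m).mul nA).const_mul x₁).integrable
    have hint2 : Integrable (fun z => x₂ * (z ^ m * B z)) μ :=
      (((nice_zpow hc m).mul nB).const_mul x₂).integrable
    have h0 : Jz μ m (fun z => x₁ * A z + x₂ * B z)
        = ∫ z, x₁ * (z ^ m * A z) + x₂ * (z ^ m * B z) ∂μ :=
      integral_congr_ae (Eventually.of_forall fun z => show
        z ^ m * (x₁ * A z + x₂ * B z) = x₁ * (z ^ m * A z) + x₂ * (z ^ m * B z) from by ring)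
    rw [h0, integral_add hint1 hint2, int_const_mul, int_const_mul]
    rfl
  -- the real constants
  set S : ℝ := a^2 + (1+e^2)*b^2 with hSdef
  have hSpos : 0 < S := by
    have h1 : (0:ℝ) < a^2 := pow_pos ha 2
    have h2 : (0:ℝ) < b^2 := pow_pos hb 2
    have h3 : (0:ℝ) ≤ e^2*b^2 := mul_nonneg (sq_nonneg e) h2.le
    rw [hSdef]; nlinarith
  have hS0 : S ≠ 0 := ne_of_gt hSpos
  have hSne : ((S:ℝ):ℂ) ≠ 0 := Complex.ofReal_ne_zero.mpr hS0
  have hScast : ((S:ℝ):ℂ) = ((a:ℂ))^2 + (1+((e:ℂ))^2)*((b:ℂ))^2 := by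
    rw [hSdef]; push_cast; ring
  have hSne' : ((a:ℂ))^2 + (1+((e:ℂ))^2)*((b:ℂ))^2 ≠ 0 := hScast ▸ hSne
  set S2 : ℝ := 4*a^2*b^2/S with hS2def
  have hS2pos : 0 < S2 := by
    have h1 : 0 < a^2*b^2 := mul_pos (pow_pos ha 2) (pow_pos hb 2)
    rw [hS2def]
    exact div_pos (by nlinarith) hSpos
  have hS2cast : ((S2:ℝ):ℂ) = 4*((a:ℂ))^2*((b:ℂ))^2/((S:ℝ):ℂ) := by
    rw [hS2def]; push_cast; ring
  set c₁ : ℂ := 2*(1+I*(e:ℂ))*((b:ℂ))^2/((S:ℝ):ℂ) with hc₁def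
  set c₂ : ℂ := 2*I*((a:ℂ))^2/((S:ℝ):ℂ) with hc₂def
  -- coefficient identities
  have hu1 : (1:ℂ)*((1 - I*(e:ℂ))/2) + (I - (e:ℂ))*((0 - I*(1:ℂ))/2) = 1 := by
    linear_combination (-(1:ℂ)/2) * I_sq
  have hv1 : (1:ℂ)*((1 + I*(e:ℂ))/2) + (I - (e:ℂ))*((0 + I*(1:ℂ))/2) = 0 := by
    linear_combination ((1:ℂ)/2) * I_sq
  have hu2 : c₁*((1 - I*(e:ℂ))/2) + c₂*((0 - I*(1:ℂ))/2) = 1 := by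
    rw [hc₁def, hc₂def, div_mul_eq_mul_div, div_mul_eq_mul_div, ← add_div,
      div_eq_one_iff_eq hSne, hScast]
    linear_combination (-((e:ℂ)^2*((b:ℂ))^2 + ((a:ℂ))^2)) * I_sq
  have hID : c₁*((a:ℂ))^2 + c₂*((I - (e:ℂ))*((b:ℂ))^2) = 0 := by
    rw [hc₁def, hc₂def]
    field_simp
    linear_combination (2*((a:ℂ))^2*((b:ℂ))^2) * I_sq
  have hID2 : c₁*((a:ℂ))^2 + c₂*(-(I + (e:ℂ))*((b:ℂ))^2) = ((S2:ℝ):ℂ) := by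
    rw [hc₁def, hc₂def, hS2cast]
    field_simp
    linear_combination (-2*((a:ℂ))^2*((b:ℂ))^2) * I_sq
  -- F₁ := A + (I - e) B
  have repF1 : (fun z => A z + (I - (e:ℂ)) * B z) =ᵐ[μ]
      repF n 1 0 (fun k => 1*((cA k : ℝ):ℂ) + (I - (e:ℂ))*((cB k : ℝ):ℂ))
        (fun k => 1*((dA k : ℝ):ℂ) + (I - (e:ℂ))*((dB k : ℝ):ℂ)) := by
    filter_upwards [repA, repB] with z h1 h2
    have hcomb := repF_comb n 1 (I - (e:ℂ)) ((1 - I*(e:ℂ))/2) ((1 + I*(e:ℂ))/2)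
      ((0 - I*(1:ℂ))/2) ((0 + I*(1:ℂ))/2) (fun k => ((cA k : ℝ):ℂ)) (fun k => ((dA k : ℝ):ℂ))
      (fun k => ((cB k : ℝ):ℂ)) (fun k => ((dB k : ℝ):ℂ)) z
    rw [hu1, hv1] at hcomb
    have hstep : A z + (I - (e:ℂ)) * B z
        = 1 * repF n ((1 - I*(e:ℂ))/2) ((1 + I*(e:ℂ))/2)
            (fun k => ((cA k : ℝ):ℂ)) (fun k => ((dA k : ℝ):ℂ)) z
          + (I - (e:ℂ)) * repF n ((0 - I*(1:ℂ))/2) ((0 + I*(1:ℂ))/2)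
            (fun k => ((cB k : ℝ):ℂ)) (fun k => ((dB k : ℝ):ℂ)) z := by
      rw [h1, h2]; ring
    rw [hstep, hcomb]
  have nF1 : Nice μ (fun z => A z + (I - (e:ℂ)) * B z) :=
    (nice_repF hc n _ _ _ _).congr repF1.symm
  have hF1eq : (fun z => A z + (I - (e:ℂ)) * B z) =ᵐ[μ]
      (fun z => 1 * A z + (I - (e:ℂ)) * B z) := Eventually.of_forall fun z => by ring
  have hJF1low : ∀ m : ℤ, -(n:ℤ) < m → m < (n:ℤ) →
      Jz μ m (fun z => A z + (I - (e:ℂ)) * B z) = 0 := by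
    intro m h1 h2
    rw [Jz_congr hF1eq, hJF 1 (I - (e:ℂ)) m, hJA m h1 h2, hJB m h1 h2]
    ring
  have hJF1neg : Jz μ (-(n:ℤ)) (fun z => A z + (I - (e:ℂ)) * B z) = ((S:ℝ):ℂ) := by
    rw [Jz_congr hF1eq, hJF 1 (I - (e:ℂ)) _, hJAnneg, hJBnneg, hScast]
    linear_combination (-((b:ℂ))^2) * I_sq
  -- F₂ := c₁ A + c₂ B
  set w : ℂ := c₁*((1 + I*(e:ℂ))/2) + c₂*((0 + I*(1:ℂ))/2) with hwdef
  have repF2 : (fun z => c₁ * A z + c₂ * B z) =ᵐ[μ]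
      repF n 1 w (fun k => c₁*((cA k : ℝ):ℂ) + c₂*((cB k : ℝ):ℂ))
        (fun k => c₁*((dA k : ℝ):ℂ) + c₂*((dB k : ℝ):ℂ)) := by
    filter_upwards [repA, repB] with z h1 h2
    have hcomb := repF_comb n c₁ c₂ ((1 - I*(e:ℂ))/2) ((1 + I*(e:ℂ))/2)
      ((0 - I*(1:ℂ))/2) ((0 + I*(1:ℂ))/2) (fun k => ((cA k : ℝ):ℂ)) (fun k => ((dA k : ℝ):ℂ))
      (fun k => ((cB k : ℝ):ℂ)) (fun k => ((dB k : ℝ):ℂ)) z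
    rw [hu2, ← hwdef] at hcomb
    rw [h1, h2]
    exact hcomb
  have nF2 : Nice μ (fun z => c₁ * A z + c₂ * B z) :=
    (nice_repF hc n _ _ _ _).congr repF2.symm
  have hJF2low : ∀ m : ℤ, -(n:ℤ) < m → m < (n:ℤ) →
      Jz μ m (fun z => c₁ * A z + c₂ * B z) = 0 := by
    intro m h1 h2
    rw [hJF c₁ c₂ m, hJA m h1 h2, hJB m h1 h2]
    ring
  have hJF2n : Jz μ (n:ℤ) (fun z => c₁ * A z + c₂ * B z) = 0 := by
    rw [hJF c₁ c₂ _, hJAn, hJBn]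
    exact hID
  have hJF2neg : Jz μ (-(n:ℤ)) (fun z => c₁ * A z + c₂ * B z) = ((S2:ℝ):ℂ) := by
    rw [hJF c₁ c₂ _, hJAnneg, hJBnneg]
    exact hID2
  -- conjugate representations
  have repC1 : (fun z => (starRingEnd ℂ) (A z + (I - (e:ℂ)) * B z)) =ᵐ[μ]
      repF n 0 1
        (fun k => (starRingEnd ℂ) (1*((cA k : ℝ):ℂ) + (I - (e:ℂ))*((cB k : ℝ):ℂ)))
        (fun k => (starRingEnd ℂ) (1*((dA k : ℝ):ℂ) + (I - (e:ℂ))*((dB k : ℝ):ℂ))) := by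
    filter_upwards [repF1, hc] with z h1 h2
    rw [show (starRingEnd ℂ) (A z + (I - (e:ℂ)) * B z)
        = (starRingEnd ℂ) (repF n 1 0 (fun k => 1*((cA k : ℝ):ℂ) + (I - (e:ℂ))*((cB k : ℝ):ℂ))
            (fun k => 1*((dA k : ℝ):ℂ) + (I - (e:ℂ))*((dB k : ℝ):ℂ)) z) from by rw [h1],
      repF_conj h2, map_zero, map_one]
  have repC2 : (fun z => (starRingEnd ℂ) (c₁ * A z + c₂ * B z)) =ᵐ[μ]
      repF n ((starRingEnd ℂ) w) 1
        (fun k => (starRingEnd ℂ) (c₁*((cA k : ℝ):ℂ) + c₂*((cB k : ℝ):ℂ)))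
        (fun k => (starRingEnd ℂ) (c₁*((dA k : ℝ):ℂ) + c₂*((dB k : ℝ):ℂ))) := by
    filter_upwards [repF2, hc] with z h1 h2
    rw [show (starRingEnd ℂ) (c₁ * A z + c₂ * B z)
        = (starRingEnd ℂ) (repF n 1 w (fun k => c₁*((cA k : ℝ):ℂ) + c₂*((cB k : ℝ):ℂ))
            (fun k => c₁*((dA k : ℝ):ℂ) + c₂*((dB k : ℝ):ℂ)) z) from by rw [h1],
      repF_conj h2, map_one]
  -- the norms
  have norm1 : ∫ z, (starRingEnd ℂ) (A z + (I - (e:ℂ)) * B z) * (A z + (I - (e:ℂ)) * B z) ∂μ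
      = ((S:ℝ):ℂ) := by
    have hcong : (fun z => (starRingEnd ℂ) (A z + (I - (e:ℂ)) * B z) * (A z + (I - (e:ℂ)) * B z))
        =ᵐ[μ] (fun z => repF n 0 1
          (fun k => (starRingEnd ℂ) (1*((cA k : ℝ):ℂ) + (I - (e:ℂ))*((cB k : ℝ):ℂ)))
          (fun k => (starRingEnd ℂ) (1*((dA k : ℝ):ℂ) + (I - (e:ℂ))*((dB k : ℝ):ℂ))) z
            * (A z + (I - (e:ℂ)) * B z)) := by
      filter_upwards [repC1] with z h
      rw [h]
    rw [integral_congr_ae hcong, repF_int hc n _ _ _ _ nF1, tail0 _ _ _ hJF1low, hJF1neg]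
    ring
  have norm2 : ∫ z, (starRingEnd ℂ) (c₁ * A z + c₂ * B z) * (c₁ * A z + c₂ * B z) ∂μ
      = ((S2:ℝ):ℂ) := by
    have hcong : (fun z => (starRingEnd ℂ) (c₁ * A z + c₂ * B z) * (c₁ * A z + c₂ * B z))
        =ᵐ[μ] (fun z => repF n ((starRingEnd ℂ) w) 1
          (fun k => (starRingEnd ℂ) (c₁*((cA k : ℝ):ℂ) + c₂*((cB k : ℝ):ℂ)))
          (fun k => (starRingEnd ℂ) (c₁*((dA k : ℝ):ℂ) + c₂*((dB k : ℝ):ℂ))) z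
            * (c₁ * A z + c₂ * B z)) := by
      filter_upwards [repC2] with z h
      rw [h]
    rw [integral_congr_ae hcong, repF_int hc n _ _ _ _ nF2, tail0 _ _ _ hJF2low, hJF2n,
      hJF2neg]
    ring
  -- shifted tail-vanishing
  have tailS : ∀ (γ δ : ℕ → ℂ) (g : ℂ → ℂ) (l : ℤ), (n:ℤ) - 1 ≤ l →
      (∀ m : ℤ, -(l + (n:ℤ)) < m → m ≤ 0 → Jz μ m g = 0) →
      (∑ k ∈ Finset.range n,
        (γ k * ((Jz μ ((k:ℤ) - l) g + Jz μ (-(k:ℤ) - l) g)/2) +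
         δ k * ((Jz μ ((k:ℤ) - l) g - Jz μ (-(k:ℤ) - l) g)/(2*I)))) = 0 := by
    intro γ δ g l hl hgo
    refine Finset.sum_eq_zero fun k hk => ?_
    have hk' := Finset.mem_range.mp hk
    have hk2 : (k:ℤ) < (n:ℤ) := by exact_mod_cast hk'
    have hk0 : (0:ℤ) ≤ (k:ℤ) := Int.natCast_nonneg k
    rw [hgo ((k:ℤ) - l) (by omega) (by omega), hgo (-(k:ℤ) - l) (by omega) (by omega)]
    simp
  -- Q₁ = z^(n-1) F₁
  have nQ1 : Nice μ (fun z => z ^ (n-1) * (A z + (I - (e:ℂ)) * B z)) :=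
    (nice_pow hc (n-1)).mul nF1
  have hQ1o : ∀ m : ℤ, -((2*n-1 : ℕ):ℤ) < m → m ≤ 0 →
      Jz μ m (fun z => z ^ (n-1) * (A z + (I - (e:ℂ)) * B z)) = 0 := by
    intro m h1 h2
    rw [Jz_shift_nat hz0 m (n-1) _]
    exact hJF1low _ (by omega) (by omega)
  have hQ1act : ∀ g : ℂ → ℂ, Nice μ g →
      (∀ m : ℤ, -((2*n-1:ℕ):ℤ) < m → m ≤ 0 → Jz μ m g = 0) →
      ∫ z, (starRingEnd ℂ) (z ^ (n-1) * (A z + (I - (e:ℂ)) * B z)) * g z ∂μ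
        = Jz μ (-((2*n-1:ℕ):ℤ)) g := by
    intro g hg hgo
    have hg' : Nice μ (fun z => z ^ (-(((n-1):ℕ):ℤ)) * g z) := (nice_zpow hc _).mul hg
    have hstep : ∫ z, (starRingEnd ℂ) (z ^ (n-1) * (A z + (I - (e:ℂ)) * B z)) * g z ∂μ
        = ∫ z, repF n 0 1
            (fun k => (starRingEnd ℂ) (1*((cA k : ℝ):ℂ) + (I - (e:ℂ))*((cB k : ℝ):ℂ)))
            (fun k => (starRingEnd ℂ) (1*((dA k : ℝ):ℂ) + (I - (e:ℂ))*((dB k : ℝ):ℂ))) z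
            * (z ^ (-(((n-1):ℕ):ℤ)) * g z) ∂μ := by
      refine integral_congr_ae ?_
      filter_upwards [repC1, hc] with z h1 h2
      have hzp : ((z:ℂ) ^ (n-1))⁻¹ = z ^ (-(((n-1):ℕ):ℤ)) := by rw [zpow_neg, zpow_natCast]
      rw [map_mul, map_pow, conj_eq_inv h2, inv_pow, hzp, h1]
      ring
    rw [hstep, repF_int hc n _ _ _ _ hg']
    have hsh : ∀ m : ℤ, Jz μ m (fun z => z ^ (-(((n-1):ℕ):ℤ)) * g z)
        = Jz μ (m - ((n-1:ℕ):ℤ)) g := by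
      intro m
      rw [Jz_shift hz0, sub_eq_add_neg]
    simp only [hsh]
    rw [tailS _ _ g ((n-1:ℕ):ℤ) (by omega) (fun m hm1 hm2 => hgo m (by omega) hm2)]
    rw [show (-(n:ℤ) - ((n-1:ℕ):ℤ)) = -(((2*n-1:ℕ)):ℤ) from by omega]
    ring
  -- Q₂ = z^n F₂
  have nQ2 : Nice μ (fun z => z ^ n * (c₁ * A z + c₂ * B z)) :=
    (nice_pow hc n).mul nF2
  have hQ2o : ∀ m : ℤ, -((2*n : ℕ):ℤ) < m → m ≤ 0 →
      Jz μ m (fun z => z ^ n * (c₁ * A z + c₂ * B z)) = 0 := by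
    intro m h1 h2
    rw [Jz_shift_nat hz0 m n _]
    by_cases hm0 : m = 0
    · subst hm0
      rw [show ((0:ℤ) + (n:ℕ)) = (n:ℤ) from by omega]
      exact hJF2n
    · exact hJF2low _ (by omega) (by omega)
  have hQ2act : ∀ g : ℂ → ℂ, Nice μ g →
      (∀ m : ℤ, -((2*n:ℕ):ℤ) < m → m ≤ 0 → Jz μ m g = 0) →
      ∫ z, (starRingEnd ℂ) (z ^ n * (c₁ * A z + c₂ * B z)) * g z ∂μ
        = Jz μ (-((2*n:ℕ):ℤ)) g := by
    intro g hg hgo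
    have hg' : Nice μ (fun z => z ^ (-((n:ℕ):ℤ)) * g z) := (nice_zpow hc _).mul hg
    have hstep : ∫ z, (starRingEnd ℂ) (z ^ n * (c₁ * A z + c₂ * B z)) * g z ∂μ
        = ∫ z, repF n ((starRingEnd ℂ) w) 1
            (fun k => (starRingEnd ℂ) (c₁*((cA k : ℝ):ℂ) + c₂*((cB k : ℝ):ℂ)))
            (fun k => (starRingEnd ℂ) (c₁*((dA k : ℝ):ℂ) + c₂*((dB k : ℝ):ℂ))) z
            * (z ^ (-((n:ℕ):ℤ)) * g z) ∂μ := by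
      refine integral_congr_ae ?_
      filter_upwards [repC2, hc] with z h1 h2
      have hzp : ((z:ℂ) ^ n)⁻¹ = z ^ (-((n:ℕ):ℤ)) := by rw [zpow_neg, zpow_natCast]
      rw [map_mul, map_pow, conj_eq_inv h2, inv_pow, hzp, h1]
      ring
    rw [hstep, repF_int hc n _ _ _ _ hg']
    have hsh : ∀ m : ℤ, Jz μ m (fun z => z ^ (-((n:ℕ):ℤ)) * g z)
        = Jz μ (m - ((n:ℕ):ℤ)) g := by
      intro m
      rw [Jz_shift hz0, sub_eq_add_neg]
    simp only [hsh]
    rw [tailS _ _ g ((n:ℕ):ℤ) (by omega) (fun m hm1 hm2 => hgo m (by omega) hm2)]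
    rw [show ((n:ℤ) - ((n:ℕ):ℤ)) = 0 from by omega, hgo 0 (by omega) le_rfl]
    rw [show (-(n:ℤ) - ((n:ℕ):ℤ)) = -(((2*n:ℕ)):ℤ) from by omega]
    ring
  -- the polynomial side
  have hPo1 : ∀ m : ℤ, -((2*n-1:ℕ):ℤ) < m → m ≤ 0 →
      Jz μ m (fun z => (D.Φ (2*n-1)).eval z) = 0 := by
    intro m h1 h2
    have hj : (-m).toNat < 2*n-1 := by omega
    have h := D.Φ_orth (2*n-1) _ hj
    have hcong : (fun z : ℂ => z ^ m * (D.Φ (2*n-1)).eval z)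
        =ᵐ[μ] (fun z => (starRingEnd ℂ) (z ^ ((-m).toNat)) * (D.Φ (2*n-1)).eval z) := by
      filter_upwards [hc] with z hz
      rw [map_pow, conj_eq_inv hz, inv_pow,
        show ((z:ℂ) ^ ((-m).toNat))⁻¹ = z ^ (-((((-m).toNat):ℕ):ℤ)) from by
          rw [zpow_neg, zpow_natCast],
        show (-((((-m).toNat):ℕ):ℤ)) = m from by omega]
    rw [show Jz μ m (fun z => (D.Φ (2*n-1)).eval z) = _ from integral_congr_ae hcong]
    exact h
  have hPo2 : ∀ m : ℤ, -((2*n:ℕ):ℤ) < m → m ≤ 0 →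
      Jz μ m (fun z => (D.Φ (2*n)).eval z) = 0 := by
    intro m h1 h2
    have hj : (-m).toNat < 2*n := by omega
    have h := D.Φ_orth (2*n) _ hj
    have hcong : (fun z : ℂ => z ^ m * (D.Φ (2*n)).eval z)
        =ᵐ[μ] (fun z => (starRingEnd ℂ) (z ^ ((-m).toNat)) * (D.Φ (2*n)).eval z) := by
      filter_upwards [hc] with z hz
      rw [map_pow, conj_eq_inv hz, inv_pow,
        show ((z:ℂ) ^ ((-m).toNat))⁻¹ = z ^ (-((((-m).toNat):ℕ):ℤ)) from by
          rw [zpow_neg, zpow_natCast],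
        show (-((((-m).toNat):ℕ):ℤ)) = m from by omega]
    rw [show Jz μ m (fun z => (D.Φ (2*n)).eval z) = _ from integral_congr_ae hcong]
    exact h
  have key1 : ∫ z, (starRingEnd ℂ) ((D.Φ (2*n-1)).eval z) * (D.Φ (2*n-1)).eval z ∂μ
      = ∫ z, (starRingEnd ℂ) (z ^ (n-1) * (A z + (I - (e:ℂ)) * B z))
          * (z ^ (n-1) * (A z + (I - (e:ℂ)) * B z)) ∂μ :=
    key_norm (2*n-1) _ _
      (poly_act hc (D.Φ (2*n-1)) (D.Φ_deg (2*n-1)) (D.Φ_monic (2*n-1)))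
      hQ1act hPo1 hQ1o (nice_poly hc _) nQ1
  have key2 : ∫ z, (starRingEnd ℂ) ((D.Φ (2*n)).eval z) * (D.Φ (2*n)).eval z ∂μ
      = ∫ z, (starRingEnd ℂ) (z ^ n * (c₁ * A z + c₂ * B z))
          * (z ^ n * (c₁ * A z + c₂ * B z)) ∂μ :=
    key_norm (2*n) _ _
      (poly_act hc (D.Φ (2*n)) (D.Φ_deg (2*n)) (D.Φ_monic (2*n)))
      hQ2act hPo2 hQ2o (nice_poly hc _) nQ2
  have hQQ1 : ∫ z, (starRingEnd ℂ) (z ^ (n-1) * (A z + (I - (e:ℂ)) * B z))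
      * (z ^ (n-1) * (A z + (I - (e:ℂ)) * B z)) ∂μ
      = ∫ z, (starRingEnd ℂ) (A z + (I - (e:ℂ)) * B z) * (A z + (I - (e:ℂ)) * B z) ∂μ := by
    refine integral_congr_ae ?_
    filter_upwards [hc] with z hz
    have hz0' : z ≠ 0 := fun h0 => by simp [h0] at hz
    rw [map_mul, map_pow, conj_eq_inv hz]
    rw [show (z⁻¹ ^ (n-1) * (starRingEnd ℂ) (A z + (I - (e:ℂ)) * B z))
          * (z ^ (n-1) * (A z + (I - (e:ℂ)) * B z))
        = (z⁻¹ ^ (n-1) * z ^ (n-1))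
          * ((starRingEnd ℂ) (A z + (I - (e:ℂ)) * B z) * (A z + (I - (e:ℂ)) * B z)) from by
        ring,
      inv_pow, inv_mul_cancel₀ (pow_ne_zero _ hz0'), one_mul]
  have hQQ2 : ∫ z, (starRingEnd ℂ) (z ^ n * (c₁ * A z + c₂ * B z))
      * (z ^ n * (c₁ * A z + c₂ * B z)) ∂μ
      = ∫ z, (starRingEnd ℂ) (c₁ * A z + c₂ * B z) * (c₁ * A z + c₂ * B z) ∂μ := by
    refine integral_congr_ae ?_
    filter_upwards [hc] with z hz
    have hz0' : z ≠ 0 := fun h0 => by simp [h0] at hz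
    rw [map_mul, map_pow, conj_eq_inv hz]
    rw [show (z⁻¹ ^ n * (starRingEnd ℂ) (c₁ * A z + c₂ * B z))
          * (z ^ n * (c₁ * A z + c₂ * B z))
        = (z⁻¹ ^ n * z ^ n)
          * ((starRingEnd ℂ) (c₁ * A z + c₂ * B z) * (c₁ * A z + c₂ * B z)) from by
        ring,
      inv_pow, inv_mul_cancel₀ (pow_ne_zero _ hz0'), one_mul]
  have habs1 : ((∫ z, ‖(D.Φ (2*n-1)).eval z‖^2 ∂μ : ℝ) : ℂ) = ((S:ℝ):ℂ) := by
    have h0 : ((∫ z, ‖(D.Φ (2*n-1)).eval z‖^2 ∂μ : ℝ) : ℂ)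
        = ∫ z, ((‖(D.Φ (2*n-1)).eval z‖^2 : ℝ) : ℂ) ∂μ := by
      exact (integral_ofReal).symm
    rw [h0]
    calc ∫ z, ((‖(D.Φ (2*n-1)).eval z‖^2 : ℝ) : ℂ) ∂μ
        = ∫ z, (starRingEnd ℂ) ((D.Φ (2*n-1)).eval z) * (D.Φ (2*n-1)).eval z ∂μ := by
          refine integral_congr_ae (Eventually.of_forall fun z => ?_)
          show ((‖(D.Φ (2*n-1)).eval z‖^2 : ℝ) : ℂ)
            = (starRingEnd ℂ) ((D.Φ (2*n-1)).eval z) * (D.Φ (2*n-1)).eval z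
          rw [Complex.sq_norm, ← Complex.mul_conj]
          ring
      _ = ((S:ℝ):ℂ) := by rw [key1, hQQ1, norm1]
  have habs2 : ((∫ z, ‖(D.Φ (2*n)).eval z‖^2 ∂μ : ℝ) : ℂ) = ((S2:ℝ):ℂ) := by
    have h0 : ((∫ z, ‖(D.Φ (2*n)).eval z‖^2 ∂μ : ℝ) : ℂ)
        = ∫ z, ((‖(D.Φ (2*n)).eval z‖^2 : ℝ) : ℂ) ∂μ := by
      exact (integral_ofReal).symm
    rw [h0]
    calc ∫ z, ((‖(D.Φ (2*n)).eval z‖^2 : ℝ) : ℂ) ∂μ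
        = ∫ z, (starRingEnd ℂ) ((D.Φ (2*n)).eval z) * (D.Φ (2*n)).eval z ∂μ := by
          refine integral_congr_ae (Eventually.of_forall fun z => ?_)
          show ((‖(D.Φ (2*n)).eval z‖^2 : ℝ) : ℂ)
            = (starRingEnd ℂ) ((D.Φ (2*n)).eval z) * (D.Φ (2*n)).eval z
          rw [Complex.sq_norm, ← Complex.mul_conj]
          ring
      _ = ((S2:ℝ):ℂ) := by rw [key2, hQQ2, norm2]
  have hS1val : (∫ z, ‖(D.Φ (2*n-1)).eval z‖^2 ∂μ : ℝ) = S := by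
    exact_mod_cast habs1
  have hS2val : (∫ z, ‖(D.Φ (2*n)).eval z‖^2 ∂μ : ℝ) = S2 := by
    exact_mod_cast habs2
  have hk1 : D.κ (2*n-1) ^ 2 * S = 1 := by rw [← hS1val]; exact D.κ_def (2*n-1)
  have hk2 : D.κ (2*n) ^ 2 * S2 = 1 := by rw [← hS2val]; exact D.κ_def (2*n)
  have hSa : D.κ (2*n-1)^2 = 1/S := by rw [eq_div_iff hS0]; exact hk1
  have hSb : D.κ (2*n)^2 = 1/S2 := by rw [eq_div_iff (ne_of_gt hS2pos)]; exact hk2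
  have ha0 : a ≠ 0 := ne_of_gt ha
  have hb0 : b ≠ 0 := ne_of_gt hb
  rw [hSa, hSb, hS2def]
  field_simp
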